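/- Let A be a ring with no p-torsion such that A/pA is reduced. Then the p-adic completion = lim A/p^n A has no p-torsion and is reduced. -/

import Mathlib

private lemma cancel_p {p : ℕ} {A : Type*} [CommRing A]
    (htf : ∀ a : A, p • a = 0 → a = 0) {a b : A} (h : (p : A) * a = (p : A) * b) : a = b := by
  have h1 : p • (a - b) = 0 := by
    rw [nsmul_eq_mul, mul_sub, h, sub_self]
  exact sub_eq_zero.mp (htf _ h1)

private lemma key_div {p : ℕ} [Fact p.Prime] {A : Type*} [CommRing A]
    (htf : ∀ a : A, p • a = 0 → a = 0)
    (hred : IsReduced (A ⧸ Ideal.span {(p : A)})) :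
    ∀ n : ℕ, ∀ a : A, (p : A) ^ (2 * n) ∣ a * a → (p : A) ^ n ∣ a := by
  intro n
  induction n with
  | zero => intro a _; simpa using one_dvd a
  | succ n ih =>
    intro a h
    have hp : (p : A) ∣ a := by
      have h1 : (p : A) ∣ a * a := dvd_trans (dvd_pow_self _ (by omega)) h
      have h2 : (Ideal.Quotient.mk (Ideal.span {(p : A)}) a) ^ 2 = 0 := by
        rw [pow_two, ← map_mul, Ideal.Quotient.eq_zero_iff_mem, Ideal.mem_span_singleton]
        exact h1
      have hz : (Ideal.Quotient.mk (Ideal.span {(p : A)}) a) = 0 :=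
        hred.eq_zero _ ⟨2, h2⟩
      rwa [Ideal.Quotient.eq_zero_iff_mem, Ideal.mem_span_singleton] at hz
    obtain ⟨b, rfl⟩ := hp
    obtain ⟨c, hc⟩ := h
    have hb : b * b = (p : A) ^ (2 * n) * c := by
      have h2 : (p : A) * ((p : A) * (b * b)) =
          (p : A) * ((p : A) * ((p : A) ^ (2 * n) * c)) := by
        ring_nf
        ring_nf at hc
        linear_combination hc
      exact cancel_p htf (cancel_p htf h2)
    obtain ⟨d, hd⟩ := ih b ⟨c, hb⟩
    exact ⟨d, by rw [hd, pow_succ]; ring⟩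

private lemma isReduced_of_sq {R : Type*} [CommRing R] (h : ∀ x : R, x * x = 0 → x = 0) :
    IsReduced R := by
  constructor
  intro x hx
  obtain ⟨n, hn⟩ := hx
  induction n using Nat.strong_induction_on generalizing x with
  | _ n ih =>
    rcases n with _ | _ | m
    · have h1 := congrArg (x * ·) hn
      simpa using h1
    · rwa [pow_one] at hn
    · have hm : (x ^ (m + 1)) * (x ^ (m + 1)) = 0 := by
        rw [← pow_add]
        have he : m + 1 + (m + 1) = m + 2 + m := by omega
        rw [he, pow_add, hn, zero_mul]
      exact ih (m + 1) (by omega) _ (h _ hm)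

theorem adicCompletion_no_p_torsion_and_reduced (p : ℕ) [Fact p.Prime] (A : Type*) [CommRing A]
    (htf : ∀ a : A, p • a = 0 → a = 0)
    (hred : IsReduced (A ⧸ Ideal.span {(p : A)})) :
    (∀ x : AdicCompletion (Ideal.span {(p : A)}) A, p • x = 0 → x = 0) ∧
      IsReduced (AdicCompletion (Ideal.span {(p : A)}) A) := by
  set I : Ideal A := Ideal.span {(p : A)} with hI
  have hmem : ∀ (n : ℕ) (a : A), a ∈ (I ^ n • ⊤ : Ideal A) ↔ (p : A) ^ n ∣ a := by
    intro n a
    rw [smul_eq_mul, Ideal.mul_top, hI, Ideal.span_singleton_pow, Ideal.mem_span_singleton]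
  constructor
  · intro x hx
    apply AdicCompletion.ext
    intro n
    rw [AdicCompletion.val_zero]
    obtain ⟨a, ha⟩ := Ideal.Quotient.mk_surjective
      (I := (I ^ (n + 1) • ⊤ : Ideal A)) (x.val (n + 1))
    have hz : p • x.val (n + 1) = 0 := congrFun (congrArg Subtype.val hx) (n + 1)
    have h1 : (p : A) ^ (n + 1) ∣ (p : A) * a := by
      rw [← hmem, ← Ideal.Quotient.eq_zero_iff_mem, ← nsmul_eq_mul, map_nsmul, ha]
      exact hz
    obtain ⟨c, hc⟩ := h1
    have ha' : a = (p : A) ^ n * c := by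
      apply cancel_p htf
      rw [hc, pow_succ]; ring
    have hv : x.val n = Ideal.Quotient.mk (I ^ n • ⊤ : Ideal A) a := by
      rw [← x.property (Nat.le_succ n), ← ha]
      rfl
    rw [hv, Pi.zero_apply, Ideal.Quotient.eq_zero_iff_mem, hmem]
    exact ⟨c, ha'⟩
  · apply isReduced_of_sq
    intro x hx
    apply AdicCompletion.ext
    intro n
    rw [AdicCompletion.val_zero]
    obtain ⟨a, ha⟩ := Ideal.Quotient.mk_surjective
      (I := (I ^ (2 * n) • ⊤ : Ideal A)) (x.val (2 * n))
    have h1 : (p : A) ^ (2 * n) ∣ a * a := by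
      rw [← hmem, ← Ideal.Quotient.eq_zero_iff_mem, map_mul, ha]
      have hz : (x * x).val (2 * n) = 0 := by rw [hx]; rfl
      rwa [AdicCompletion.val_mul] at hz
    have h2 := key_div htf hred n a h1
    have hv : x.val n = Ideal.Quotient.mk (I ^ n • ⊤ : Ideal A) a := by
      rw [← x.property (by omega : n ≤ 2 * n), ← ha]
      rfl
    rw [hv, Pi.zero_apply, Ideal.Quotient.eq_zero_iff_mem, hmem]
    exact h2
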